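/- Let N ≥ 1 be an integer and let G be a (−N,N)-graph satisfying mean payoff. Write the set of distances {dist(v_init,v) : v ∈ V} in increasing order as d_0 < d_1 < ⋯ < d_{m−1}. Then for every i ∈ [1,m), we have 1 ≤ d_i − d_{i−1} ≤ N − 1. -/

import Mathlib

open Filter


/-- A finite path: a list of consecutive edges, all belonging to `E`,
starting at `u` (when nonempty). -/
def FinPath {V : Type} (E : Set (V × ℤ × V)) (u : V) (p : List (V × ℤ × V)) : Prop :=
  (∀ e ∈ p, e ∈ E) ∧ List.Chain' (fun e e' => e.2.2 = e'.1) p ∧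
    ∀ h : p ≠ [], (p.head h).1 = u

/-- The last vertex of a finite path starting at `u` (which is `u` itself for the empty path). -/
def lastV {V : Type} (u : V) (p : List (V × ℤ × V)) : V :=
  (p.getLastD (u, 0, u)).2.2

/-- An infinite path: a sequence of consecutive edges, all belonging to `E`. -/
def InfPath {V : Type} (E : Set (V × ℤ × V)) (π : ℕ → V × ℤ × V) : Prop :=
  (∀ i, π i ∈ E) ∧ ∀ i, (π i).2.2 = (π (i + 1)).1

/-- The total weight of a finite path. -/
def pathWeight {V : Type} (p : List (V × ℤ × V)) : ℤ :=
  (p.map fun e => e.2.1).sum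

/-- A sequence of integer weights satisfies mean payoff if the liminf of the
averages of its prefixes is nonnegative. -/
def MeanPayoffSeq (w : ℕ → ℤ) : Prop :=
  0 ≤ Filter.atTop.liminf (fun ℓ : ℕ => (∑ i ∈ Finset.range ℓ, (w i : ℝ)) / (ℓ : ℝ))

/-- A graph (given by its edge set) satisfies mean payoff if all its infinite paths do. -/
def SatMP {V : Type} (E : Set (V × ℤ × V)) : Prop :=
  ∀ π : ℕ → V × ℤ × V, InfPath E π → MeanPayoffSeq (fun i => (π i).2.1)

/-- A cycle: a nonempty finite path whose first and last vertices coincide. -/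
def IsCycle {V : Type} (E : Set (V × ℤ × V)) (p : List (V × ℤ × V)) : Prop :=
  p ≠ [] ∧ ∃ v, FinPath E v p ∧ lastV v p = v

/-- A `W`-graph: a finite set of vertices, edges labelled by weights in `W`,
and an initial vertex from which every vertex is reachable. -/
structure WGraph (W : Finset ℤ) where
  V : Type
  fin : Fintype V
  E : Set (V × ℤ × V)
  init : V
  wt : ∀ e ∈ E, e.2.1 ∈ W
  reach : ∀ v : V, ∃ p, FinPath E init p ∧ lastV init p = v

attribute [instance] WGraph.fin

/-- The `W`-linear graph on a set `A ⊆ ℤ`: vertices are the elements of `A`, and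
for `v, v' ∈ A` and `w ∈ W` there is an edge `(v, w, v')` whenever `v' - v ≤ w`. -/
def LinE (W : Finset ℤ) (A : Set ℤ) : Set (ℤ × ℤ × ℤ) :=
  {e | e.1 ∈ A ∧ e.2.2 ∈ A ∧ e.2.1 ∈ W ∧ e.2.2 - e.1 ≤ e.2.1}

/-- A homomorphism of labelled graphs (no requirement on initial vertices). -/
def IsHom {V U : Type} (E : Set (V × ℤ × V)) (E' : Set (U × ℤ × U)) (φ : V → U) : Prop :=
  ∀ e ∈ E, (φ e.1, e.2.1, φ e.2.2) ∈ E'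

/-- A graph (given by its edge set) is `(n,W)`-universal if it satisfies mean payoff and
every `(n,W)`-graph satisfying mean payoff admits a homomorphism into it. -/
def Universal (n : ℕ) (W : Finset ℤ) {U : Type} (EU : Set (U × ℤ × U)) : Prop :=
  SatMP EU ∧
    ∀ G : WGraph W, Fintype.card G.V ≤ n → SatMP G.E → ∃ φ : G.V → U, IsHom G.E EU φ

/-- The set of weights `(-N, N)`: integers `w` with `-N < w < N`. -/
noncomputable def Wball (N : ℕ) : Finset ℤ := Finset.Ioo (-(N : ℤ)) (N : ℤ)

/-- `φ` is the distance function from the initial vertex: `φ v` is the minimum total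
weight of a finite path from the initial vertex to `v`. -/
def IsDistFrom {W : Finset ℤ} (G : WGraph W) (φ : G.V → ℤ) : Prop :=
  ∀ v : G.V,
    (∃ p, FinPath G.E G.init p ∧ lastV G.init p = v ∧ pathWeight p = φ v) ∧
    ∀ p, FinPath G.E G.init p → lastV G.init p = v → φ v ≤ pathWeight p

section Aux

variable {V : Type} {E : Set (V × ℤ × V)}

lemma pathWeight_append (p q : List (V × ℤ × V)) :
    pathWeight (p ++ q) = pathWeight p + pathWeight q := by
  simp [pathWeight]

lemma lastV_append (u : V) (p q : List (V × ℤ × V)) :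
    lastV u (p ++ q) = lastV (lastV u p) q := by
  cases q with
  | nil => simp [lastV]
  | cons a q' =>
    simp only [lastV, List.getLastD_eq_getLast?, List.getLast?_append]
    cases h : (a :: q').getLast? with
    | none => simp at h
    | some x => simp

lemma lastV_nonempty (u : V) (p : List (V × ℤ × V)) (h : p ≠ []) :
    lastV u p = (p.getLast h).2.2 := by
  simp [lastV, List.getLastD_eq_getLast?, List.getLast?_eq_getLast h]

lemma FinPath.append_path {u : V} {p q : List (V × ℤ × V)}
    (hp : FinPath E u p) (hq : FinPath E (lastV u p) q) :
    FinPath E u (p ++ q) := by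
  obtain ⟨hp1, hp2, hp3⟩ := hp
  obtain ⟨hq1, hq2, hq3⟩ := hq
  refine ⟨?_, ?_, ?_⟩
  · intro e he
    rcases List.mem_append.1 he with h | h
    · exact hp1 e h
    · exact hq1 e h
  · rw [List.Chain', List.isChain_append]
    refine ⟨hp2, hq2, ?_⟩
    intro x hx y hy
    have hpne : p ≠ [] := by rintro rfl; simp at hx
    have hqne : q ≠ [] := by rintro rfl; simp at hy
    have hxl : x = p.getLast hpne := by
      rw [List.getLast?_eq_getLast hpne] at hx; exact (Option.mem_some_iff.1 hx).symm
    have hyh : y = q.head hqne := by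
      rw [List.head?_eq_head hqne] at hy; exact (Option.mem_some_iff.1 hy).symm
    rw [hxl, hyh, ← lastV_nonempty u p hpne]
    exact (hq3 hqne).symm
  · intro h
    rcases eq_or_ne p [] with rfl | hpne
    · have hqne : q ≠ [] := by simpa using h
      have he1 : ((([] : List (V × ℤ × V)) ++ q).head h) = q.head hqne := rfl
      have he2 : lastV u ([] : List (V × ℤ × V)) = u := by simp [lastV]
      rw [he1, hq3 hqne, he2]
    · rw [List.head_append_of_ne_nil hpne]
      exact hp3 hpne

lemma FinPath.take_path {u : V} {p : List (V × ℤ × V)}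
    (hp : FinPath E u p) (i : ℕ) : FinPath E u (p.take i) := by
  obtain ⟨hp1, hp2, hp3⟩ := hp
  refine ⟨fun e he => hp1 e (List.take_subset i p he), hp2.take i, ?_⟩
  intro h
  rw [List.head_take h]
  exact hp3 _

lemma FinPath.drop_path {u : V} {p : List (V × ℤ × V)}
    (hp : FinPath E u p) (i : ℕ) : FinPath E (lastV u (p.take i)) (p.drop i) := by
  obtain ⟨hp1, hp2, hp3⟩ := hp
  refine ⟨fun e he => hp1 e (List.drop_subset i p he), hp2.drop i, ?_⟩
  intro h
  have hi : i < p.length := by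
    by_contra hi
    exact h (List.drop_eq_nil_of_le (le_of_not_gt hi))
  rw [List.head_drop]
  cases i with
  | zero =>
    have : lastV u (p.take 0) = u := by simp [lastV]
    rw [this]
    have hpne : p ≠ [] := by rintro rfl; simp at hi
    have : p[0] = p.head hpne := by
      cases p with
      | nil => simp at hpne
      | cons a l => rfl
    rw [this]; exact hp3 hpne
  | succ j =>
    have hj : j < p.length := by omega
    have ht : p.take (j + 1) = p.take j ++ [p[j]] := by
      rw [List.take_succ]
      congr 1
      simp [List.getElem?_eq_getElem hj]
    have hl : lastV u (p.take (j + 1)) = p[j].2.2 := by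
      rw [ht, lastV_append]
      simp [lastV]
    rw [hl]
    have := List.isChain_iff_getElem.1 hp2 j (by omega)
    simpa using this.symm

lemma lastV_take_succ (u : V) (p : List (V × ℤ × V)) {j : ℕ} (hj : j < p.length) :
    lastV u (p.take (j + 1)) = p[j].2.2 := by
  have ht : p.take (j + 1) = p.take j ++ [p[j]] := by
    rw [List.take_succ]
    congr 1
    simp [List.getElem?_eq_getElem hj]
  rw [ht, lastV_append]
  simp [lastV]

lemma pathWeight_take_succ (p : List (V × ℤ × V)) {j : ℕ} (hj : j < p.length) :
    pathWeight (p.take (j + 1)) = pathWeight (p.take j) + p[j].2.1 := by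
  have ht : p.take (j + 1) = p.take j ++ [p[j]] := by
    rw [List.take_succ]
    congr 1
    simp [List.getElem?_eq_getElem hj]
  rw [ht, pathWeight_append]
  simp [pathWeight]

end Aux

/-- Along a shortest path, every prefix is a shortest path to its endpoint. -/
lemma shortest_prefix {W : Finset ℤ} (G : WGraph W) (φ : G.V → ℤ) (hφ : IsDistFrom G φ)
    {p : List (G.V × ℤ × G.V)} (hp : FinPath G.E G.init p)
    (hw : pathWeight p = φ (lastV G.init p)) (i : ℕ) :
    φ (lastV G.init (p.take i)) = pathWeight (p.take i) := by
  set x := lastV G.init (p.take i) with hx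
  have hle : φ x ≤ pathWeight (p.take i) :=
    (hφ x).2 (p.take i) (hp.take_path i) rfl
  obtain ⟨q, hq, hqlast, hqw⟩ := (hφ x).1
  have hdrop : FinPath G.E x (p.drop i) := by
    have := hp.drop_path i; rwa [← hx] at this
  have hqd : FinPath G.E G.init (q ++ p.drop i) := by
    refine hq.append_path ?_
    rwa [hqlast]
  have hlast2 : lastV G.init (q ++ p.drop i) = lastV G.init p := by
    rw [lastV_append, hqlast, ← lastV_append, List.take_append_drop]
  have hge : φ (lastV G.init p) ≤ pathWeight (q ++ p.drop i) :=
    (hφ _).2 _ hqd hlast2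
  rw [pathWeight_append, hqw] at hge
  have hsplit : pathWeight p = pathWeight (p.take i) + pathWeight (p.drop i) := by
    rw [← pathWeight_append, List.take_append_drop]
  omega

/-- The crossing lemma. -/
lemma cross_lemma (f : ℕ → ℤ) (a b C : ℤ) :
    ∀ n, a < b → (∀ i ≤ n, f i ≤ a ∨ b ≤ f i) → f 0 ≤ a → b ≤ f n →
      (∀ i < n, f (i + 1) - f i ≤ C) → b - a ≤ C := by
  intro n
  induction n with
  | zero => intro hab _ h0 hn _; omega
  | succ m ih =>
    intro hab hvals h0 hn hstep
    rcases hvals m (by omega) with h | h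
    · have := hstep m (by omega); omega
    · exact ih hab (fun i hi => hvals i (by omega)) h0 h (fun i hi => hstep i (by omega))

/-- let `G` be a `(-N,N)`-graph satisfying mean payoff and `φ` its
distance function from the initial vertex. Then any two consecutive values of `φ`
(i.e. values `φ v < φ v'` with no value strictly in between) differ by at least `1`
and at most `N - 1`. -/
theorem consecutive_distances (N : ℕ) (hN : 1 ≤ N) (G : WGraph (Wball N))
    (hMP : SatMP G.E) (φ : G.V → ℤ) (hφ : IsDistFrom G φ) :
    ∀ v v' : G.V, φ v < φ v' → (∀ u : G.V, ¬(φ v < φ u ∧ φ u < φ v')) →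
      1 ≤ φ v' - φ v ∧ φ v' - φ v ≤ (N : ℤ) - 1 := by
  intro v v' hlt hbet
  refine ⟨by omega, ?_⟩
  have hvals : ∀ u : G.V, φ u ≤ φ v ∨ φ v' ≤ φ u := by
    intro u
    by_contra h
    push_neg at h
    exact hbet u ⟨by omega, by omega⟩
  have hwt : ∀ e ∈ G.E, -(N : ℤ) + 1 ≤ e.2.1 ∧ e.2.1 ≤ (N : ℤ) - 1 := by
    intro e he
    have := G.wt e he
    simp [Wball, Finset.mem_Ioo] at this
    omega
  have key : ∀ z : G.V, ∃ (p : List (G.V × ℤ × G.V)),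
      FinPath G.E G.init p ∧
      φ (lastV G.init (p.take 0)) = φ G.init ∧
      φ (lastV G.init (p.take p.length)) = φ z ∧
      ∀ j < p.length,
        (φ (lastV G.init (p.take (j+1))) - φ (lastV G.init (p.take j))).natAbs ≤ N - 1 := by
    intro z
    obtain ⟨p, hp, hplast, hpw⟩ := (hφ z).1
    refine ⟨p, hp, by simp [lastV], by simp [hplast], ?_⟩
    intro j hj
    have hw' : pathWeight p = φ (lastV G.init p) := by rw [hplast, hpw]
    have h1 := shortest_prefix G φ hφ hp hw' j
    have h2 := shortest_prefix G φ hφ hp hw' (j + 1)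
    rw [pathWeight_take_succ p hj] at h2
    have he : p[j] ∈ G.E := hp.1 _ (List.getElem_mem hj)
    have := hwt _ he
    have hN1 : 1 ≤ N := hN
    omega
  rcases hvals G.init with hA | hB
  · -- initial vertex below: go up along shortest path to v'
    obtain ⟨p, hp, h0, hn, hstep⟩ := key v'
    refine cross_lemma (fun i => φ (lastV G.init (p.take i))) (φ v) (φ v') ((N : ℤ) - 1)
      p.length hlt (fun i _ => hvals _) ?_ ?_ ?_
    · show φ (lastV G.init (p.take 0)) ≤ φ v
      rw [h0]; exact hA
    · show φ v' ≤ φ (lastV G.init (p.take p.length))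
      rw [hn]
    · intro i hi
      show φ (lastV G.init (p.take (i + 1))) - φ (lastV G.init (p.take i)) ≤ (N : ℤ) - 1
      have := hstep i hi
      omega
  · -- initial vertex above: go down along shortest path to v
    obtain ⟨p, hp, h0, hn, hstep⟩ := key v
    refine cross_lemma (fun i => φ (lastV G.init (p.take (p.length - i)))) (φ v) (φ v')
      ((N : ℤ) - 1) p.length hlt (fun i _ => hvals _) ?_ ?_ ?_
    · show φ (lastV G.init (p.take (p.length - 0))) ≤ φ v
      rw [Nat.sub_zero, hn]
    · show φ v' ≤ φ (lastV G.init (p.take (p.length - p.length)))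
      rw [Nat.sub_self, h0]; exact hB
    · intro i hi
      show φ (lastV G.init (p.take (p.length - (i + 1)))) -
        φ (lastV G.init (p.take (p.length - i))) ≤ (N : ℤ) - 1
      have hj : p.length - i = (p.length - (i + 1)) + 1 := by omega
      have := hstep (p.length - (i + 1)) (by omega)
      rw [hj]
      omega
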